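/- arXiv:0810.0702 — 3 statements merged into one kernel-verified Lean document; each statement's English description precedes it below -/
import Mathlib

section
/- Let g ≥ 1 and d ≥ 2 be integers and set δ := (d−1)(d−2)/2 − g (an integer). If the Brill–Noether number ρ(g,2,d) := g − 3(g−d+2) is nonnegative and 3d + g − 1 ≥ 2δ, then d ≤ 9 and g ≤ 10. -/
/-- Numerical core of Severi's unirationality argument: if `g ≥ 1`, `d ≥ 2`,
`δ = (d-1)(d-2)/2 - g`, the Brill–Noether number `ρ(g,2,d) = g - 3(g-d+2)` is
nonnegative and `3d + g - 1 ≥ 2δ`, then `d ≤ 9` and `g ≤ 10`. -/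
theorem severi_numerics (g d δ : ℤ) (hg : 1 ≤ g) (hd : 2 ≤ d)
    (hδ : δ = (d - 1) * (d - 2) / 2 - g)
    (hρ : 0 ≤ g - 3 * (g - d + 2))
    (hineq : 3 * d + g - 1 ≥ 2 * δ) :
    d ≤ 9 ∧ g ≤ 10 := by
  obtain ⟨k, hk⟩ : Even ((d - 1) * (d - 2)) := by
    have := Int.even_mul_succ_self (d - 2)
    have : (d - 2) * (d - 2 + 1) = (d - 1) * (d - 2) := by ring
    simpa [this] using Int.even_mul_succ_self (d - 2)
  have hk2 : (d - 1) * (d - 2) = 2 * k := by linarith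
  have hδ' : δ = k - g := by rw [hδ, hk2]; omega
  have hdle : d ≤ 9 := by nlinarith
  refine ⟨hdle, by nlinarith⟩
end

section
/- For every integer i ≥ 0, the following binomial identity holds: ∑_{l=0}^{i} (−1)^l · C(2i+3, i−l) · C(2i+4+l, 2i+3) + ∑_{l=0}^{i−1} (−1)^l · C(2i+4+l, l+2) · C(2i+2, i−l−1) = 4(2i+1) · C(2i, i), where C(n,k) denotes the binomial coefficient (so for i = 0 the second sum is empty). -/
open Finset

/-- The alternating convolution `∑_{l=0}^m (-1)^l C(n+l,l) C(n,m-l)`. -/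
def koszulB (n m : ℕ) : ℤ :=
  ∑ l ∈ Finset.range (m + 1),
    (-1 : ℤ) ^ l * ((n + l).choose l : ℤ) * (n.choose (m - l) : ℤ)

lemma koszulB_zero (n : ℕ) : koszulB n 0 = 1 := by simp [koszulB]

lemma koszulB_zero_left (m : ℕ) : koszulB 0 m = (-1) ^ m := by
  rw [koszulB, Finset.sum_eq_single m]
  · simp
  · intro l hl hne
    have hlm : l < m := lt_of_le_of_ne (Nat.lt_succ_iff.mp (Finset.mem_range.mp hl)) hne
    have h0 : (0 : ℕ).choose (m - l) = 0 := Nat.choose_eq_zero_of_lt (by omega)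
    simp [h0]
  · intro h; exact absurd (Finset.self_mem_range_succ m) h

lemma koszulB_stepA (n m : ℕ) :
    koszulB (n + 1) (m + 1) + koszulB (n + 1) m =
      ∑ l ∈ Finset.range (m + 2),
        (-1 : ℤ) ^ l * ((n + l).choose l : ℤ) * ((n + 1).choose (m + 1 - l) : ℤ) := by
  rw [koszulB, koszulB, Finset.sum_range_succ' _ (m + 1),
    Finset.sum_range_succ'
      (fun l => (-1 : ℤ) ^ l * ((n + l).choose l : ℤ) * ((n + 1).choose (m + 1 - l) : ℤ))
      (m + 1)]
  have hsum :
      (∑ j ∈ Finset.range (m + 1),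
          (-1 : ℤ) ^ (j + 1) * ((n + 1 + (j + 1)).choose (j + 1) : ℤ) *
            ((n + 1).choose (m + 1 - (j + 1)) : ℤ)) +
        ∑ l ∈ Finset.range (m + 1),
          (-1 : ℤ) ^ l * ((n + 1 + l).choose l : ℤ) * ((n + 1).choose (m - l) : ℤ) =
      ∑ j ∈ Finset.range (m + 1),
        (-1 : ℤ) ^ (j + 1) * ((n + (j + 1)).choose (j + 1) : ℤ) *
          ((n + 1).choose (m + 1 - (j + 1)) : ℤ) := by
    rw [← Finset.sum_add_distrib]
    refine Finset.sum_congr rfl ?_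
    intro j hj
    have hp : ((n + 1 + (j + 1)).choose (j + 1) : ℤ) =
        ((n + (j + 1)).choose j : ℤ) + ((n + (j + 1)).choose (j + 1) : ℤ) := by
      have h := Nat.choose_succ_succ (n + (j + 1)) j
      rw [show n + 1 + (j + 1) = n + (j + 1) + 1 by ring]
      exact_mod_cast h
    have hq : ((n + 1 + j).choose j : ℤ) = ((n + (j + 1)).choose j : ℤ) := by
      rw [show n + 1 + j = n + (j + 1) by ring]
    have hr : m + 1 - (j + 1) = m - j := by omega
    rw [hp, hq, hr, pow_succ]
    ring
  simp only [pow_zero, one_mul, Nat.add_zero, Nat.sub_zero, Nat.choose_zero_right,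
    Nat.cast_one, mul_one] at hsum ⊢
  linarith [hsum]

lemma koszulB_stepB (n m : ℕ) :
    (∑ l ∈ Finset.range (m + 2),
        (-1 : ℤ) ^ l * ((n + l).choose l : ℤ) * ((n + 1).choose (m + 1 - l) : ℤ)) =
      koszulB n (m + 1) + koszulB n m := by
  rw [koszulB, koszulB, Finset.sum_range_succ _ (m + 1),
    Finset.sum_range_succ
      (fun l => (-1 : ℤ) ^ l * ((n + l).choose l : ℤ) * (n.choose (m + 1 - l) : ℤ))
      (m + 1)]
  have hsum :
      (∑ l ∈ Finset.range (m + 1),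
          (-1 : ℤ) ^ l * ((n + l).choose l : ℤ) * ((n + 1).choose (m + 1 - l) : ℤ)) =
        (∑ l ∈ Finset.range (m + 1),
          (-1 : ℤ) ^ l * ((n + l).choose l : ℤ) * (n.choose (m + 1 - l) : ℤ)) +
        ∑ l ∈ Finset.range (m + 1),
          (-1 : ℤ) ^ l * ((n + l).choose l : ℤ) * (n.choose (m - l) : ℤ) := by
    rw [← Finset.sum_add_distrib]
    refine Finset.sum_congr rfl ?_
    intro l hl
    have hl' : l ≤ m := Nat.lt_succ_iff.mp (Finset.mem_range.mp hl)
    have hp : ((n + 1).choose (m + 1 - l) : ℤ) =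
        (n.choose (m - l) : ℤ) + (n.choose (m + 1 - l) : ℤ) := by
      have h := Nat.choose_succ_succ n (m - l)
      rw [show m + 1 - l = m - l + 1 by omega]
      exact_mod_cast h
    rw [hp]; ring
  rw [hsum]
  simp only [Nat.sub_self, Nat.choose_zero_right, Nat.cast_one, mul_one]
  ring

lemma koszulB_step (n m : ℕ) :
    koszulB (n + 1) (m + 1) + koszulB (n + 1) m = koszulB n (m + 1) + koszulB n m :=
  (koszulB_stepA n m).trans (koszulB_stepB n m)

lemma koszulB_pair (n m : ℕ) : koszulB n (m + 1) + koszulB n m = 0 := by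
  induction n with
  | zero =>
    rw [koszulB_zero_left, koszulB_zero_left, pow_succ]; ring
  | succ k ih => rw [koszulB_step]; exact ih

lemma koszulB_eq (n m : ℕ) : koszulB n m = (-1) ^ m := by
  induction m with
  | zero => simpa using koszulB_zero n
  | succ k ih =>
    have h := koszulB_pair n k
    rw [ih] at h
    rw [pow_succ]
    linarith

lemma koszul_choose_final (i : ℕ) :
    ((2 * i + 4) * (2 * i + 2).choose i : ℤ) = 4 * (2 * i + 1) * ((2 * i).choose i : ℤ) := by
  have h1 : ((2 * i + 1) * (2 * i).choose i : ℤ) =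
      ((2 * i + 1).choose (i + 1) : ℤ) * (i + 1) := by
    exact_mod_cast congrArg (Nat.cast : ℕ → ℤ) (Nat.add_one_mul_choose_eq (2 * i) i)
  have h2 : ((2 * i + 2) * (2 * i + 1).choose (i + 1) : ℤ) =
      ((2 * i + 2).choose (i + 2) : ℤ) * (i + 2) := by
    exact_mod_cast congrArg (Nat.cast : ℕ → ℤ) (Nat.add_one_mul_choose_eq (2 * i + 1) (i + 1))
  have h3 : ((2 * i + 2).choose i : ℤ) = ((2 * i + 2).choose (i + 2) : ℤ) := by
    have := Nat.choose_symm (n := 2 * i + 2) (k := i + 2) (by omega)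
    rw [show 2 * i + 2 - (i + 2) = i by omega] at this
    exact_mod_cast this
  have key : ((i : ℤ) + 1) * ((i : ℤ) + 2) * ((2 * i + 4) * (2 * i + 2).choose i) =
      ((i : ℤ) + 1) * ((i : ℤ) + 2) * (4 * (2 * i + 1) * ((2 * i).choose i : ℤ)) := by
    rw [h3]
    linear_combination (-(2 * (i:ℤ) + 4) * ((i:ℤ) + 1)) * h2 +
      (-(2 * (i:ℤ) + 4) * (2 * (i:ℤ) + 2)) * h1
  have hne : ((i : ℤ) + 1) * ((i : ℤ) + 2) ≠ 0 := by positivity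
  exact mul_left_cancel₀ hne key

/-- The binomial identity computing `c₁(H_{i,2}) = 4(2i+1)·C(2i,i)·c₁(H_{0,1})`
in the proof of the class of the virtual Koszul divisor on `M̄_{2i+3}`. -/
theorem koszul_hodge_class_identity (i : ℕ) :
    (∑ l ∈ Finset.range (i + 1),
        (-1 : ℤ) ^ l * (Nat.choose (2 * i + 3) (i - l)) *
          (Nat.choose (2 * i + 4 + l) (2 * i + 3))) +
      (∑ l ∈ Finset.range i,
        (-1 : ℤ) ^ l * (Nat.choose (2 * i + 4 + l) (l + 2)) *
          (Nat.choose (2 * i + 2) (i - l - 1))) =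
    4 * (2 * i + 1) * (Nat.choose (2 * i) i) := by
  -- First sum
  have e1 : (∑ l ∈ Finset.range (i + 1),
      (-1 : ℤ) ^ l * (Nat.choose (2 * i + 3) (i - l)) *
        (Nat.choose (2 * i + 4 + l) (2 * i + 3))) =
      ((2 * i + 3).choose (i + 1) : ℤ) - koszulB (2 * i + 3) (i + 1) := by
    rw [koszulB, Finset.sum_range_succ' _ (i + 1)]
    have hterm : ∀ j ∈ Finset.range (i + 1),
        (-1 : ℤ) ^ (j + 1) * ((2 * i + 3 + (j + 1)).choose (j + 1) : ℤ) *
          ((2 * i + 3).choose (i + 1 - (j + 1)) : ℤ) =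
        -((-1 : ℤ) ^ j * (Nat.choose (2 * i + 3) (i - j) : ℤ) *
          (Nat.choose (2 * i + 4 + j) (2 * i + 3) : ℤ)) := by
      intro j hj
      have hsymm : (2 * i + 4 + j).choose (j + 1) = (2 * i + 4 + j).choose (2 * i + 3) := by
        have := Nat.choose_symm (n := 2 * i + 4 + j) (k := 2 * i + 3) (by omega)
        rw [show 2 * i + 4 + j - (2 * i + 3) = j + 1 by omega] at this
        exact this
      rw [show 2 * i + 3 + (j + 1) = 2 * i + 4 + j by ring,
        show i + 1 - (j + 1) = i - j by omega, hsymm, pow_succ]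
      ring
    rw [Finset.sum_congr rfl hterm, Finset.sum_neg_distrib]
    simp
  -- Second sum
  have e2 : (∑ l ∈ Finset.range i,
      (-1 : ℤ) ^ l * (Nat.choose (2 * i + 4 + l) (l + 2)) *
        (Nat.choose (2 * i + 2) (i - l - 1))) =
      koszulB (2 * i + 2) (i + 1) - ((2 * i + 2).choose (i + 1) : ℤ) +
        (2 * i + 3) * ((2 * i + 2).choose i : ℤ) := by
    rw [koszulB, Finset.sum_range_succ' _ (i + 1), Finset.sum_range_succ' _ i]
    have hterm : ∀ k ∈ Finset.range i,
        (-1 : ℤ) ^ (k + 1 + 1) * ((2 * i + 2 + (k + 1 + 1)).choose (k + 1 + 1) : ℤ) *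
          ((2 * i + 2).choose (i + 1 - (k + 1 + 1)) : ℤ) =
        (-1 : ℤ) ^ k * (Nat.choose (2 * i + 4 + k) (k + 2) : ℤ) *
          (Nat.choose (2 * i + 2) (i - k - 1) : ℤ) := by
      intro k hk
      rw [show 2 * i + 2 + (k + 1 + 1) = 2 * i + 4 + k by ring,
        show k + 1 + 1 = k + 2 by ring,
        show i + 1 - (k + 2) = i - k - 1 by omega, pow_succ, pow_succ]
      ring
    rw [Finset.sum_congr rfl hterm]
    simp only [pow_zero, pow_succ, pow_one, Nat.choose_zero_right, Nat.sub_zero,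
      Nat.add_zero, Nat.cast_one, one_mul, mul_one]
    rw [show (2 * i + 2 + (0 + 1)).choose (0 + 1) = 2 * i + 3 from by
      rw [show (0:ℕ) + 1 = 1 from rfl, Nat.choose_one_right]]
    rw [show i + 1 - (0 + 1) = i by omega]
    push_cast
    ring
  rw [e1, e2, koszulB_eq, koszulB_eq]
  have hpascal : ((2 * i + 3).choose (i + 1) : ℤ) =
      ((2 * i + 2).choose i : ℤ) + ((2 * i + 2).choose (i + 1) : ℤ) := by
    exact_mod_cast congrArg (Nat.cast : ℕ → ℤ) (Nat.choose_succ_succ (2 * i + 2) i)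
  have hfin := koszul_choose_final i
  rw [hpascal, pow_succ]
  push_cast at hfin ⊢
  linarith
end

section
/- For every integer i ≥ 0, the following binomial identity holds: ∑_{l=0}^{i} (−1)^l · C(2i+3, i−l) · C(2i+4+l, l+2) = (2i+2) · ∑_{l=0}^{i} (−1)^l · (2l+3) · C(2i+3, i−l), where C(n,k) denotes the binomial coefficient. -/
open Finset

lemma myG (m : ℕ) : ∀ a k : ℕ,
    ∑ l ∈ Finset.range (k + 1),
      (-1 : ℤ) ^ l * ((m + l).choose l : ℤ) * ((m + 1 + a).choose (k - l) : ℤ)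
    = (a.choose k : ℤ) := by
  induction m with
  | zero =>
    intro a k
    induction k with
    | zero => simp
    | succ k ihk =>
      rw [Finset.sum_range_succ']
      have h1 : ∀ l ∈ Finset.range (k + 1),
          (-1 : ℤ) ^ (l+1) * ((0 + (l+1)).choose (l+1) : ℤ) * ((0 + 1 + a).choose (k + 1 - (l+1)) : ℤ)
          = -((-1 : ℤ) ^ l * ((0 + l).choose l : ℤ) * ((0 + 1 + a).choose (k - l) : ℤ)) := by
        intro l _
        simp [Nat.succ_sub_succ, Nat.choose_self, pow_succ]
      rw [Finset.sum_congr rfl h1, Finset.sum_neg_distrib, ihk]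
      have : (a + 1).choose (k + 1) = a.choose k + a.choose (k + 1) := Nat.choose_succ_succ' a k
      simp only [zero_add, Nat.choose_self, Nat.choose_zero_right, pow_zero]
      push_cast [show 1 + a = a + 1 from by ring, this]
      ring
  | succ m ihm =>
    intro a k
    induction k with
    | zero => simp
    | succ k ihk =>
      rw [Finset.sum_range_succ']
      have h1 : ∀ l ∈ Finset.range (k + 1),
          (-1 : ℤ) ^ (l+1) * ((m + 1 + (l+1)).choose (l+1) : ℤ) * ((m + 1 + 1 + a).choose (k + 1 - (l+1)) : ℤ)
          = -((-1 : ℤ) ^ l * ((m + 1 + l).choose l : ℤ) * ((m + 1 + 1 + a).choose (k - l) : ℤ))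
            - ((-1 : ℤ) ^ l * ((m + 1 + l).choose (l+1) : ℤ) * ((m + 1 + 1 + a).choose (k - l) : ℤ)) := by
        intro l _
        have e1 : m + 1 + (l + 1) = (m + 1 + l) + 1 := by ring
        rw [e1, Nat.choose_succ_succ', Nat.succ_sub_succ, pow_succ]
        push_cast
        ring
      rw [Finset.sum_congr rfl h1, Finset.sum_sub_distrib, Finset.sum_neg_distrib, ihk]
      have h2 := ihm (a + 1) (k + 1)
      rw [Finset.sum_range_succ'] at h2
      have h3 : ∀ l ∈ Finset.range (k + 1),
          (-1 : ℤ) ^ (l+1) * ((m + (l+1)).choose (l+1) : ℤ) * ((m + 1 + (a+1)).choose (k + 1 - (l+1)) : ℤ)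
          = -((-1 : ℤ) ^ l * ((m + 1 + l).choose (l+1) : ℤ) * ((m + 1 + 1 + a).choose (k - l) : ℤ)) := by
        intro l _
        have e1 : m + (l + 1) = m + 1 + l := by ring
        have e2 : m + 1 + (a + 1) = m + 1 + 1 + a := by ring
        rw [e1, e2, Nat.succ_sub_succ, pow_succ]
        ring
      rw [Finset.sum_congr rfl h3, Finset.sum_neg_distrib] at h2
      have e2 : m + 1 + (a + 1) = m + 1 + 1 + a := by ring
      rw [e2] at h2
      simp only [Nat.sub_zero, Nat.choose_zero_right, pow_zero, Nat.cast_one, mul_one, one_mul,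
        Nat.add_zero] at h2 ⊢
      have pas : ((a + 1).choose (k + 1) : ℤ) = a.choose k + a.choose (k + 1) := by
        exact_mod_cast congrArg Nat.cast (Nat.choose_succ_succ' a k)
      linarith [h2]

/-- The binomial identity expressing `rank(H_{i,2}) = rank(G_{i,2})`, which makes
the Koszul locus `Z_{2i+3,i}` a virtual divisor on `M_{2i+3}`. -/
theorem koszul_rank_identity (i : ℕ) :
    (∑ l ∈ Finset.range (i + 1),
        (-1 : ℤ) ^ l * (Nat.choose (2 * i + 3) (i - l)) *
          (Nat.choose (2 * i + 4 + l) (l + 2))) =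
    (2 * i + 2) *
      ∑ l ∈ Finset.range (i + 1),
        (-1 : ℤ) ^ l * (2 * l + 3) * (Nat.choose (2 * i + 3) (i - l)) := by
  -- LHS via myG (2i+2) 0 (i+2)
  have hL0 := myG (2 * i + 2) 0 (i + 2)
  rw [show i + 2 + 1 = (i + 1) + 1 + 1 from rfl, Finset.sum_range_succ',
      Finset.sum_range_succ'] at hL0
  have hL1 : ∀ l ∈ Finset.range (i + 1),
      (-1 : ℤ) ^ (l + 1 + 1) * ((2 * i + 2 + (l + 1 + 1)).choose (l + 1 + 1) : ℤ)
        * ((2 * i + 2 + 1 + 0).choose (i + 2 - (l + 1 + 1)) : ℤ)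
      = (-1 : ℤ) ^ l * ((2 * i + 3).choose (i - l) : ℤ) * ((2 * i + 4 + l).choose (l + 2) : ℤ) := by
    intro l _
    have e1 : 2 * i + 2 + (l + 1 + 1) = 2 * i + 4 + l := by ring
    have e2 : 2 * i + 2 + 1 + 0 = 2 * i + 3 := by ring
    have e3 : i + 2 - (l + 1 + 1) = i - l := by omega
    have e4 : l + 1 + 1 = l + 2 := rfl
    rw [e1, e2, e3, e4, pow_succ, pow_succ]
    ring
  rw [Finset.sum_congr rfl hL1] at hL0
  simp only [Nat.choose_zero_right, Nat.choose_self, pow_zero, pow_one, Nat.cast_one,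
    one_mul, mul_one, Nat.sub_zero, Nat.add_zero, Nat.choose_zero_right] at hL0
  -- now hL0 : LHSsum + c1 + c0 = C(0, i+2) = 0 roughly; figure shape later
  -- RHS via myG 1 (2i+1) i and myG 0 (2i+2) i
  have hA := myG 1 (2 * i + 1) i
  have hB := myG 0 (2 * i + 2) i
  have hR : (∑ l ∈ Finset.range (i + 1),
        (-1 : ℤ) ^ l * (2 * l + 3) * ((2 * i + 3).choose (i - l) : ℤ))
      = 2 * ((2 * i + 1).choose i : ℤ) + ((2 * i + 2).choose i : ℤ) := by
    rw [← hA, ← hB, Finset.mul_sum, ← Finset.sum_add_distrib]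
    refine Finset.sum_congr rfl fun l _ => ?_
    have e1 : (1 : ℕ) + l = l + 1 := by ring
    have e2 : 1 + 1 + (2 * i + 1) = 2 * i + 3 := by ring
    have e3 : (0 : ℕ) + l = l := by ring
    have e4 : 0 + 1 + (2 * i + 2) = 2 * i + 3 := by ring
    rw [e1, e2, e3, e4, Nat.choose_succ_self_right, Nat.choose_self]
    push_cast
    ring
  rw [hR]
  -- binomial facts
  have s1 : (2 * i + 3).choose (i + 2) = (2 * i + 3).choose (i + 1) := by
    rw [← Nat.choose_symm (by omega : i + 1 ≤ 2 * i + 3)]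
    congr 1
    omega
  have s2 : (2 * i + 3).choose (i + 1) = (2 * i + 2).choose i + (2 * i + 2).choose (i + 1) :=
    Nat.choose_succ_succ' (2 * i + 2) i
  have s3 : (2 * i + 2).choose (i + 1) = (2 * i + 1).choose i + (2 * i + 1).choose (i + 1) :=
    Nat.choose_succ_succ' (2 * i + 1) i
  have s4 : (2 * i + 1).choose (i + 1) = (2 * i + 1).choose i := by
    rw [← Nat.choose_symm (by omega : i + 1 ≤ 2 * i + 1)]
    congr 1
    omega
  have hz : Nat.choose 0 (i + 2) = 0 := Nat.choose_eq_zero_of_lt (by omega)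
  have e5 : 2 * i + 2 + (0 + 1) = 2 * i + 3 := by ring
  have e6 : i + 2 - (0 + 1) = i + 1 := by omega
  rw [e5, e6, hz, Nat.choose_one_right] at hL0
  have hL : (∑ l ∈ Finset.range (i + 1),
      (-1 : ℤ) ^ l * ((2 * i + 3).choose (i - l) : ℤ) * ((2 * i + 4 + l).choose (l + 2) : ℤ))
      = (2 * i + 3 : ℤ) * ((2 * i + 3).choose (i + 1) : ℤ) - ((2 * i + 3).choose (i + 2) : ℤ) := by
    rw [pow_succ, pow_zero, one_mul] at hL0
    push_cast at hL0 ⊢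
    linarith
  rw [hL, s1, s2, s3, s4]
  push_cast
  ring
end
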